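/- Let k and r be primes with r = n·k + 1 for some positive integer n, let b ∈ (ℤ/r)ˣ be an element of multiplicative order k, and let φ : ℤ[ζ_k] → ℤ/r be the ring homomorphism sending ζ_k to b. If p(t) ∈ ℤ[ζ_k][t] has degree 2m, φ applied coefficientwise to p(t) also has degree 2m, and p(t) = λ·t^j·f(t)·conj(f)(t⁻¹) for some λ ∈ Q(ζ_k), j ∈ ℤ, and f(t) ∈ Q(ζ_k)[t^{±1}] (i.e., p is a norm), then φ(p(t)) factors in (ℤ/r)[t] as a product of two polynomials each of degree m. -/

import Mathlib

open Polynomial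

private lemma aux_trailing {S : Type*} [CommRing S] {q : S[X]} (hq : q ≠ 0) :
    ∃ q₁ : S[X], q = X ^ q.natTrailingDegree * q₁ ∧ q₁.coeff 0 ≠ 0 := by
  obtain ⟨q₁, hq₁⟩ : (X : S[X]) ^ q.natTrailingDegree ∣ q :=
    X_pow_dvd_iff.2 fun d hd => coeff_eq_zero_of_lt_natTrailingDegree hd
  refine ⟨q₁, hq₁, ?_⟩
  have h1 : q.coeff q.natTrailingDegree ≠ 0 := coeff_natTrailingDegree_ne_zero.mpr hq
  have h2 := coeff_X_pow_mul q₁ q.natTrailingDegree 0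
  rw [zero_add, ← hq₁] at h2
  rwa [h2] at h1

private lemma aux_cancel {S : Type*} [CommRing S] [IsDomain S] {A B : S[X]} {i j : ℕ}
    (hA : A.coeff 0 ≠ 0) (hB : B.coeff 0 ≠ 0) (h : X ^ i * A = X ^ j * B) : A = B := by
  wlog hij : i ≤ j generalizing A B i j
  · exact (this hB hA h.symm (le_of_not_ge hij)).symm
  obtain ⟨e, rfl⟩ := Nat.exists_eq_add_of_le hij
  rw [pow_add, mul_assoc] at h
  have hX : (X : S[X]) ^ i ≠ 0 := pow_ne_zero _ X_ne_zero
  have h' : A = X ^ e * B := mul_left_cancel₀ hX h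
  rcases Nat.eq_zero_or_pos e with he | he
  · simpa [he] using h'
  · exfalso
    apply hA
    rw [h', mul_comm, coeff_mul_X_pow', if_neg (by omega)]

private lemma aux_normalize {O : Type*} {K : Type*} [CommRing O] [IsDomain O] [ValuationRing O]
    [Field K] [Algebra O K] [IsFractionRing O K] {f : K[X]} (hf : f ≠ 0) :
    ∃ (α : K) (F : O[X]) (i₀ : ℕ), α ≠ 0 ∧ f = C α * F.map (algebraMap O K) ∧ F.coeff i₀ = 1 := by
  classical
  set v := ValuationRing.valuation O K with hv
  have hsup : f.support.Nonempty := nonempty_support_iff.mpr hf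
  obtain ⟨i₀, hi₀, hmax⟩ := f.support.exists_max_image (fun i => v (f.coeff i)) hsup
  set α := f.coeff i₀ with hα
  have hα0 : α ≠ 0 := mem_support_iff.mp hi₀
  have hint : ∀ n, (C α⁻¹ * f).coeff n ∈ (algebraMap O K).range := by
    intro n
    rw [coeff_C_mul]
    by_cases hn : f.coeff n = 0
    · rw [hn, mul_zero]; exact ⟨0, map_zero _⟩
    · have h1 : v (f.coeff n) ≤ v α := hmax n (mem_support_iff.mpr hn)
      have h2 : v (α⁻¹ * f.coeff n) ≤ 1 := by
        rw [map_mul, map_inv₀]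
        calc (v α)⁻¹ * v (f.coeff n) ≤ (v α)⁻¹ * v α := mul_le_mul_right h1 _
        _ = 1 := inv_mul_cancel₀ (v.ne_zero_iff.mpr hα0)
      exact (ValuationRing.mem_integer_iff O K _).mp ((v.mem_integer_iff _).mpr h2)
  obtain ⟨F, hF⟩ := (Polynomial.mem_map_range (algebraMap O K)).mpr hint
  have hF' : F.map (algebraMap O K) = C α⁻¹ * f := hF
  refine ⟨α, F, i₀, hα0, ?_, ?_⟩
  · rw [hF', ← mul_assoc, ← C_mul, mul_inv_cancel₀ hα0, C_1, one_mul]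
  · have := congrArg (fun q : K[X] => q.coeff i₀) hF'
    simp only [coeff_map, coeff_C_mul] at this
    rw [← hα, inv_mul_cancel₀ hα0] at this
    exact IsFractionRing.injective O K (by rw [this, map_one])

set_option maxHeartbeats 2000000 in
set_option synthInstance.maxHeartbeats 400000 in
theorem stmt_4 (k : ℕ+) (hk : Nat.Prime (k : ℕ)) (r : ℕ) (hr : Nat.Prime r)
    (n : ℕ) (hn : 0 < n) (hrk : r = n * (k : ℕ) + 1)
    (ζ : CyclotomicField k ℚ) (hζ : IsPrimitiveRoot ζ (k : ℕ))
    (b : ZMod r) (hb : orderOf b = (k : ℕ)) (hb1 : b ≠ 1)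
    (φ : ↥(Algebra.adjoin ℤ ({ζ} : Set (CyclotomicField k ℚ))) →+* ZMod r)
    (hφ : φ ⟨ζ, Algebra.subset_adjoin (Set.mem_singleton ζ)⟩ = b)
    (c : CyclotomicField k ℚ →+* CyclotomicField k ℚ) (hc : c ζ = ζ⁻¹)
    (p : Polynomial ↥(Algebra.adjoin ℤ ({ζ} : Set (CyclotomicField k ℚ)))) (m : ℕ)
    (hdeg : p.natDegree = 2 * m) (hdegφ : (p.map φ).natDegree = 2 * m)
    (hnorm : ∃ (lam : CyclotomicField k ℚ) (f : Polynomial (CyclotomicField k ℚ))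
      (u v : ℕ),
        X ^ u * p.map (Algebra.adjoin ℤ ({ζ} : Set (CyclotomicField k ℚ))).val.toRingHom
          = C lam * X ^ v * (f * (f.map c).reverse)) :
    ∃ g h : Polynomial (ZMod r), g.natDegree = m ∧ h.natDegree = m ∧ p.map φ = g * h := by
  rcases Nat.eq_zero_or_pos m with hm0 | hm
  · subst hm0
    exact ⟨p.map φ, 1, by simpa using hdegφ, natDegree_one, (mul_one _).symm⟩
  haveI : Fact (Nat.Prime r) := ⟨hr⟩
  haveI : Fact (Nat.Prime (k : ℕ)) := ⟨hk⟩
  haveI : IsCyclotomicExtension {(k : ℕ)} ℚ (CyclotomicField k ℚ) := by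
    haveI : NeZero ((k : ℕ) : ℚ) := ⟨by exact_mod_cast k.ne_zero⟩
    exact CyclotomicField.isCyclotomicExtension _ _
  haveI hIC : IsIntegralClosure ↥(Algebra.adjoin ℤ ({ζ} : Set (CyclotomicField k ℚ))) ℤ (CyclotomicField k ℚ) :=
    IsCyclotomicExtension.Rat.isIntegralClosure_adjoin_singleton_of_prime hζ
  haveI : FiniteDimensional ℚ (CyclotomicField k ℚ) :=
    IsCyclotomicExtension.finiteDimensional {(k : ℕ)} ℚ (CyclotomicField k ℚ)
  haveI : IsFractionRing ↥(Algebra.adjoin ℤ ({ζ} : Set (CyclotomicField k ℚ))) (CyclotomicField k ℚ) :=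
    IsIntegralClosure.isFractionRing_of_finite_extension ℤ ℚ (CyclotomicField k ℚ) ↥(Algebra.adjoin ℤ ({ζ} : Set (CyclotomicField k ℚ)))
  haveI : IsDedekindDomain ↥(Algebra.adjoin ℤ ({ζ} : Set (CyclotomicField k ℚ))) := IsIntegralClosure.isDedekindDomain ℤ ℚ (CyclotomicField k ℚ) ↥(Algebra.adjoin ℤ ({ζ} : Set (CyclotomicField k ℚ)))
  set 𝔭 := RingHom.ker φ with h𝔭def
  haveI : 𝔭.IsPrime := RingHom.ker_isPrime φ
  have h𝔭 : 𝔭 ≠ ⊥ := by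
    intro hbot
    have hmem : ((r : ℕ) : ↥(Algebra.adjoin ℤ ({ζ} : Set (CyclotomicField k ℚ)))) ∈ 𝔭 := by
      rw [h𝔭def, RingHom.mem_ker, map_natCast, ZMod.natCast_self]
    rw [hbot, Ideal.mem_bot] at hmem
    have h0 : ((r : ℕ) : CyclotomicField k ℚ) = 0 := by
      have := congrArg (algebraMap ↥(Algebra.adjoin ℤ ({ζ} : Set (CyclotomicField k ℚ))) (CyclotomicField k ℚ)) hmem
      simpa using this
    exact (Nat.cast_ne_zero.mpr hr.ne_zero) h0
  haveI := IsLocalization.AtPrime.isDiscreteValuationRing_of_dedekind_domain ↥(Algebra.adjoin ℤ ({ζ} : Set (CyclotomicField k ℚ))) h𝔭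
    (Localization.AtPrime 𝔭)
  haveI : ValuationRing (Localization.AtPrime 𝔭) := inferInstance
  letI : Algebra (Localization.AtPrime 𝔭) (CyclotomicField k ℚ) :=
    IsLocalization.localizationAlgebraOfSubmonoidLe (Localization.AtPrime 𝔭)
      (CyclotomicField k ℚ) 𝔭.primeCompl (nonZeroDivisors ↥(Algebra.adjoin ℤ ({ζ} : Set (CyclotomicField k ℚ)))) 𝔭.primeCompl_le_nonZeroDivisors
  haveI : IsScalarTower ↥(Algebra.adjoin ℤ ({ζ} : Set (CyclotomicField k ℚ))) (Localization.AtPrime 𝔭) (CyclotomicField k ℚ) :=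
    IsLocalization.localization_isScalarTower_of_submonoid_le (Localization.AtPrime 𝔭)
      (CyclotomicField k ℚ) 𝔭.primeCompl (nonZeroDivisors ↥(Algebra.adjoin ℤ ({ζ} : Set (CyclotomicField k ℚ)))) 𝔭.primeCompl_le_nonZeroDivisors
  haveI : IsFractionRing (Localization.AtPrime 𝔭) (CyclotomicField k ℚ) :=
    IsFractionRing.isFractionRing_of_isDomain_of_isLocalization
      𝔭.primeCompl (Localization.AtPrime 𝔭) (CyclotomicField k ℚ)
  have hval : (Algebra.adjoin ℤ ({ζ} : Set (CyclotomicField k ℚ))).val.toRingHom = algebraMap ↥(Algebra.adjoin ℤ ({ζ} : Set (CyclotomicField k ℚ))) (CyclotomicField k ℚ) := rfl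
  obtain ⟨lam, f, u, v, heq⟩ := hnorm
  rw [hval] at heq
  have hp0 : p ≠ 0 := by
    intro h; rw [h] at hdeg; simp only [natDegree_zero] at hdeg; omega
  have hinj : Function.Injective (algebraMap ↥(Algebra.adjoin ℤ ({ζ} : Set (CyclotomicField k ℚ))) (CyclotomicField k ℚ)) :=
    IsFractionRing.injective _ _
  have hpK0 : p.map (algebraMap ↥(Algebra.adjoin ℤ ({ζ} : Set (CyclotomicField k ℚ))) (CyclotomicField k ℚ)) ≠ 0 :=
    (Polynomial.map_ne_zero_iff hinj).mpr hp0
  have hRHS : C lam * X ^ v * (f * (f.map c).reverse) ≠ 0 := by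
    rw [← heq]
    exact mul_ne_zero (pow_ne_zero _ X_ne_zero) hpK0
  have hlam : lam ≠ 0 := by rintro rfl; simp at hRHS
  have hf0 : f ≠ 0 := by rintro rfl; simp at hRHS
  obtain ⟨p₁, hp₁, hp₁0⟩ := aux_trailing hp0
  obtain ⟨f₁, hf₁, hf₁0⟩ := aux_trailing hf0
  set s := p.natTrailingDegree with hs
  set a := f.natTrailingDegree with ha
  set g := (f₁.map c).reverse with hg
  have hp₁ne : p₁ ≠ 0 := fun h => hp₁0 (by rw [h, coeff_zero])
  have hf₁ne : f₁ ≠ 0 := fun h => hf₁0 (by rw [h, coeff_zero])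
  have hcinj : Function.Injective c := c.injective
  have hf₁c : f₁.map c ≠ 0 := (Polynomial.map_ne_zero_iff hcinj).mpr hf₁ne
  have hg0 : g.coeff 0 ≠ 0 := by
    rw [hg, coeff_zero_reverse]; exact leadingCoeff_ne_zero.mpr hf₁c
  have hgne : g ≠ 0 := fun h => hg0 (by rw [h, coeff_zero])
  have hrev : (f.map c).reverse = g := by
    rw [hf₁, Polynomial.map_mul, Polynomial.map_pow, map_X, reverse_X_pow_mul, hg]
  have heq2 : X ^ (u + s) * (p₁.map (algebraMap ↥(Algebra.adjoin ℤ ({ζ} : Set (CyclotomicField k ℚ))) (CyclotomicField k ℚ)))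
      = X ^ (v + a) * (C lam * (f₁ * g)) := by
    rw [hrev] at heq
    nth_rewrite 1 [hp₁] at heq
    nth_rewrite 1 [hf₁] at heq
    rw [Polynomial.map_mul, Polynomial.map_pow, map_X] at heq
    linear_combination heq
  have hA : (p₁.map (algebraMap ↥(Algebra.adjoin ℤ ({ζ} : Set (CyclotomicField k ℚ))) (CyclotomicField k ℚ))).coeff 0 ≠ 0 := by
    rw [coeff_map]
    exact fun h => hp₁0 (hinj (by rw [h, map_zero]))
  have hB : (C lam * (f₁ * g)).coeff 0 ≠ 0 := by
    rw [mul_coeff_zero, mul_coeff_zero, coeff_C_zero]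
    exact mul_ne_zero hlam (mul_ne_zero hf₁0 hg0)
  have heqK : p₁.map (algebraMap ↥(Algebra.adjoin ℤ ({ζ} : Set (CyclotomicField k ℚ))) (CyclotomicField k ℚ)) = C lam * (f₁ * g) :=
    aux_cancel hA hB heq2
  -- lift φ to the localization
  have hiota : Function.Injective (algebraMap (Localization.AtPrime 𝔭) (CyclotomicField k ℚ)) :=
    IsFractionRing.injective _ _
  have hu : ∀ y : 𝔭.primeCompl, IsUnit (φ y) := by
    intro y
    refine isUnit_iff_ne_zero.mpr fun h => ?_
    exact y.prop (RingHom.mem_ker.mpr h)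
  set ψ : Localization.AtPrime 𝔭 →+* ZMod r := IsLocalization.lift hu with hψ
  have hψφ : ψ.comp (algebraMap ↥(Algebra.adjoin ℤ ({ζ} : Set (CyclotomicField k ℚ))) (Localization.AtPrime 𝔭)) = φ := IsLocalization.lift_comp hu
  have hPOι : (p₁.map (algebraMap ↥(Algebra.adjoin ℤ ({ζ} : Set (CyclotomicField k ℚ))) (Localization.AtPrime 𝔭))).map
        (algebraMap (Localization.AtPrime 𝔭) (CyclotomicField k ℚ))
      = p₁.map (algebraMap ↥(Algebra.adjoin ℤ ({ζ} : Set (CyclotomicField k ℚ))) (CyclotomicField k ℚ)) := by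
    rw [Polynomial.map_map, ← IsScalarTower.algebraMap_eq]
  obtain ⟨αf, F, if₀, hαf, hfF, hFc⟩ := aux_normalize (O := Localization.AtPrime 𝔭) hf₁ne
  obtain ⟨αg, G, ig₀, hαg, hgG, hGc⟩ := aux_normalize (O := Localization.AtPrime 𝔭) hgne
  have hFψ : F.map ψ ≠ 0 := by
    intro h
    have := congrArg (fun q : (ZMod r)[X] => q.coeff if₀) h
    simp only [coeff_map, hFc, map_one, coeff_zero] at this
    exact one_ne_zero this
  have hGψ : G.map ψ ≠ 0 := by
    intro h
    have := congrArg (fun q : (ZMod r)[X] => q.coeff ig₀) h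
    simp only [coeff_map, hGc, map_one, coeff_zero] at this
    exact one_ne_zero this
  have hPμ : (p₁.map (algebraMap ↥(Algebra.adjoin ℤ ({ζ} : Set (CyclotomicField k ℚ))) (Localization.AtPrime 𝔭))).map
        (algebraMap (Localization.AtPrime 𝔭) (CyclotomicField k ℚ))
      = C (lam * αf * αg) * ((F * G).map
        (algebraMap (Localization.AtPrime 𝔭) (CyclotomicField k ℚ))) := by
    rw [hPOι, heqK]
    nth_rewrite 1 [hfF]
    nth_rewrite 1 [hgG]
    simp only [Polynomial.map_mul, map_C, C_mul]
    ring
  have hFGψ : (F * G).map ψ ≠ 0 := by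
    rw [Polynomial.map_mul]; exact mul_ne_zero hFψ hGψ
  have hexj : ∃ j, ψ ((F * G).coeff j) ≠ 0 := by
    by_contra hcon
    push_neg at hcon
    exact hFGψ (Polynomial.ext fun j => by rw [coeff_map, hcon, coeff_zero])
  obtain ⟨j, hj⟩ := hexj
  have hunit : IsUnit ((F * G).coeff j) := by
    obtain ⟨⟨x, y⟩, hxy⟩ := IsLocalization.mk'_surjective (S := Localization.AtPrime 𝔭) 𝔭.primeCompl ((F * G).coeff j)
    change IsLocalization.mk' (Localization.AtPrime 𝔭) x y = _ at hxy
    rw [← hxy] at hj ⊢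
    rw [IsLocalization.AtPrime.isUnit_mk'_iff]
    intro hx
    have hspec : φ x = φ y * ψ (IsLocalization.mk' (Localization.AtPrime 𝔭) x y) :=
      (IsLocalization.lift_mk'_spec _ _ _ _).mp rfl
    have hφx : φ x = 0 := RingHom.mem_ker.mp hx
    have hφy : φ (y : ↥(Algebra.adjoin ℤ ({ζ} : Set (CyclotomicField k ℚ)))) ≠ 0 := fun h => y.prop (RingHom.mem_ker.mpr h)
    rw [hφx] at hspec
    exact hj (by
      rcases mul_eq_zero.mp hspec.symm with h | h
      · exact absurd h hφy
      · exact h)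
  set uu := hunit.unit with huu
  set μ₀ := (p₁.map (algebraMap ↥(Algebra.adjoin ℤ ({ζ} : Set (CyclotomicField k ℚ))) (Localization.AtPrime 𝔭))).coeff j * ↑uu⁻¹ with hμ₀
  have hxu : (F * G).coeff j = ↑uu := (IsUnit.unit_spec hunit).symm
  have hcj := congrArg (fun q : (CyclotomicField k ℚ)[X] => q.coeff j) hPμ
  simp only [coeff_map, coeff_C_mul] at hcj
  have hμ₀eq : algebraMap (Localization.AtPrime 𝔭) (CyclotomicField k ℚ) μ₀
      = lam * αf * αg := by
    rw [hμ₀, map_mul, coeff_map, hcj, hxu, mul_assoc, ← map_mul, Units.mul_inv, map_one, mul_one]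
  have hPO : p₁.map (algebraMap ↥(Algebra.adjoin ℤ ({ζ} : Set (CyclotomicField k ℚ))) (Localization.AtPrime 𝔭)) = C μ₀ * (F * G) := by
    apply Polynomial.map_injective _ hiota
    rw [Polynomial.map_mul, map_C, hμ₀eq, hPμ]
  have hp₁φ : p₁.map φ = C (ψ μ₀) * (F.map ψ * G.map ψ) := by
    rw [← hψφ, ← Polynomial.map_map, hPO]
    simp only [Polynomial.map_mul, map_C]
  -- degrees
  have hdF : F.natDegree = f₁.natDegree := by
    conv_rhs => rw [hfF]
    rw [natDegree_C_mul hαf, natDegree_map_eq_of_injective hiota]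
  have htr0 : (f₁.map c).coeff 0 ≠ 0 := by
    rw [coeff_map]
    exact fun h => hf₁0 (hcinj (by rw [h, map_zero]))
  have htr : (f₁.map c).natTrailingDegree = 0 := natTrailingDegree_eq_zero.mpr (Or.inr htr0)
  have hdg : g.natDegree = f₁.natDegree := by
    rw [hg, reverse_natDegree, htr, natDegree_map_eq_of_injective hcinj, Nat.sub_zero]
  have hdG : G.natDegree = f₁.natDegree := by
    conv_rhs => rw [← hdg, hgG]
    rw [natDegree_C_mul hαg, natDegree_map_eq_of_injective hiota]
  set d := f₁.natDegree with hd
  have hdp₁ : p₁.natDegree = d + d := by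
    have h1 : (p₁.map (algebraMap ↥(Algebra.adjoin ℤ ({ζ} : Set (CyclotomicField k ℚ))) (CyclotomicField k ℚ))).natDegree = p₁.natDegree :=
      natDegree_map_eq_of_injective hinj _
    rw [← h1, heqK, natDegree_C_mul hlam, natDegree_mul hf₁ne hgne, hdg]
  have hsum : s + (d + d) = 2 * m := by
    rw [← hdp₁, ← hdeg]
    conv_rhs => rw [hp₁]
    rw [natDegree_mul (pow_ne_zero _ X_ne_zero) hp₁ne, natDegree_X_pow]
  have hpφ : p.map φ = X ^ s * p₁.map φ := by
    conv_lhs => rw [hp₁]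
    rw [Polynomial.map_mul, Polynomial.map_pow, map_X]
  have hp₁φne : p₁.map φ ≠ 0 := by
    intro h
    rw [hpφ, h, mul_zero, natDegree_zero] at hdegφ
    omega
  have hsφ : s + (p₁.map φ).natDegree = 2 * m := by
    rw [← hdegφ, hpφ, natDegree_mul (pow_ne_zero _ X_ne_zero) hp₁φne, natDegree_X_pow]
  have hψμ : ψ μ₀ ≠ 0 := by
    intro h
    exact hp₁φne (by rw [hp₁φ, h, map_zero, zero_mul])
  have hFle : (F.map ψ).natDegree ≤ d := hdF ▸ natDegree_map_le (f := ψ) (p := F)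
  have hGle : (G.map ψ).natDegree ≤ d := hdG ▸ natDegree_map_le (f := ψ) (p := G)
  have hdeq : (F.map ψ).natDegree + (G.map ψ).natDegree = d + d := by
    have h2 : (p₁.map φ).natDegree = (F.map ψ).natDegree + (G.map ψ).natDegree := by
      rw [hp₁φ, natDegree_C_mul hψμ, natDegree_mul hFψ hGψ]
    omega
  have hdFψ : (F.map ψ).natDegree = d := by omega
  have hdGψ : (G.map ψ).natDegree = d := by omega
  have hdm : d ≤ m := by omega
  have hms : m - d + (m - d) = s := by omega
  have hCψ : (C (ψ μ₀) : (ZMod r)[X]) ≠ 0 := fun h => hψμ (C_eq_zero.mp h)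
  refine ⟨X ^ (m - d) * (C (ψ μ₀) * F.map ψ), X ^ (m - d) * G.map ψ, ?_, ?_, ?_⟩
  · rw [natDegree_mul (pow_ne_zero _ X_ne_zero)
      (mul_ne_zero hCψ hFψ),
      natDegree_X_pow, natDegree_C_mul hψμ, hdFψ]
    omega
  · rw [natDegree_mul (pow_ne_zero _ X_ne_zero) hGψ, natDegree_X_pow, hdGψ]
    omega
  · rw [hpφ, hp₁φ, ← hms, pow_add]
    ring
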